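/- Let Φ(x) = (2π)^{−1/2} ∫_{−∞}^x e^{−t²/2} dt and φ(x) = (2π)^{−1/2} e^{−x²/2}. Then for every x ∈ [−2, 0), φ(x)/Φ(x) ≤ 2.374. -/

import Mathlib

namespace Stmt13

/-- The standard normal cumulative distribution function
`Φ(x) = (2π)^{-1/2} ∫_{-∞}^x e^{-t²/2} dt`. -/
noncomputable def Phi (x : ℝ) : ℝ :=
  (2 * Real.pi) ^ (-(1 / 2) : ℝ) * ∫ t in Set.Iic x, Real.exp (-t ^ 2 / 2)

/-- The standard normal density `φ(x) = (2π)^{-1/2} e^{-x²/2}`. -/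
noncomputable def phi (x : ℝ) : ℝ :=
  (2 * Real.pi) ^ (-(1 / 2) : ℝ) * Real.exp (-x ^ 2 / 2)

open MeasureTheory Filter Set

set_option maxHeartbeats 1600000

/-- Auxiliary polynomial for a lower bound on the Gaussian tail. -/
noncomputable def Q (t : ℝ) : ℝ :=
  406111/324000 + 62959/63000*t + 313207/504000*t^2 + 8633/27000*t^3 + 39317/288000*t^4 + 3379/72000*t^5 + 21307/1728000*t^6 + 331/144000*t^7 + 8677/32256000*t^8 + 2159/145152000*t^9

/-- Derivative of `Q`. -/
noncomputable def Qd (t : ℝ) : ℝ :=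
  62959/63000 + 313207/252000*t + 8633/9000*t^2 + 39317/72000*t^3 + 3379/14400*t^4 + 21307/288000*t^5 + 2317/144000*t^6 + 8677/4032000*t^7 + 2159/16128000*t^8

lemma hasDerivAt_Q (t : ℝ) : HasDerivAt Q (Qd t) t := by
  have h := ((((((((((hasDerivAt_const t (406111/324000:ℝ)).add ((hasDerivAt_id t).const_mul (62959/63000:ℝ))).add ((hasDerivAt_pow 2 t).const_mul (313207/504000:ℝ))).add ((hasDerivAt_pow 3 t).const_mul (8633/27000:ℝ))).add ((hasDerivAt_pow 4 t).const_mul (39317/288000:ℝ))).add ((hasDerivAt_pow 5 t).const_mul (3379/72000:ℝ))).add ((hasDerivAt_pow 6 t).const_mul (21307/1728000:ℝ))).add ((hasDerivAt_pow 7 t).const_mul (331/144000:ℝ))).add ((hasDerivAt_pow 8 t).const_mul (8677/32256000:ℝ))).add ((hasDerivAt_pow 9 t).const_mul (2159/145152000:ℝ)))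
  refine h.congr_deriv ?_
  simp only [Qd]; push_cast; ring

lemma hasDerivAt_gauss (t : ℝ) :
    HasDerivAt (fun t : ℝ => Real.exp (-t^2/2)) (-t * Real.exp (-t^2/2)) t := by
  have h1 : HasDerivAt (fun t : ℝ => -t^2/2) (-t) t := by
    have h := ((hasDerivAt_pow 2 t).neg).div_const (2:ℝ)
    refine h.congr_deriv ?_
    push_cast; ring
  have h := h1.exp
  convert h using 1
  ring

lemma hasDerivAt_f (t : ℝ) :
    HasDerivAt (fun t : ℝ => Q t * Real.exp (-t^2/2))
      ((Qd t - t * Q t) * Real.exp (-t^2/2)) t := by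
  have h := (hasDerivAt_Q t).mul (hasDerivAt_gauss t)
  refine h.congr_deriv ?_
  ring

lemma int_pow (n : ℕ) : Integrable (fun t : ℝ => t^n * Real.exp (-t^2/2)) := by
  have h := integrable_rpow_mul_exp_neg_mul_sq (by norm_num : (0:ℝ) < 1/2)
    (s := (n : ℝ)) (lt_of_lt_of_le neg_one_lt_zero (Nat.cast_nonneg n))
  apply h.congr
  filter_upwards with t
  rw [Real.rpow_natCast]
  ring_nf

lemma int_gauss : Integrable (fun t : ℝ => Real.exp (-t^2/2)) := by
  have h := int_pow 0
  simpa using h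

lemma int_A : Integrable (fun t : ℝ => (Qd t - t * Q t) * Real.exp (-t^2/2)) := by
  have h := ((((((((((((int_pow 0).const_mul ((62959/63000):ℝ)).add ((int_pow 1).const_mul ((-11957/1134000):ℝ))).add ((int_pow 2).const_mul ((-316/7875):ℝ))).add ((int_pow 3).const_mul ((-9497/126000):ℝ))).add ((int_pow 4).const_mul ((-18379/216000):ℝ))).add ((int_pow 5).const_mul ((-1801/28800):ℝ))).add ((int_pow 6).const_mul ((-4441/144000):ℝ))).add ((int_pow 7).const_mul ((-61559/6048000):ℝ))).add ((int_pow 8).const_mul ((-34913/16128000):ℝ))).add ((int_pow 9).const_mul ((-8677/32256000):ℝ))).add ((int_pow 10).const_mul ((-2159/145152000):ℝ)))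
  apply h.congr
  filter_upwards with t
  simp only [Pi.add_apply, Q, Qd]
  ring

lemma tend_pow (n : ℕ) :
    Tendsto (fun t : ℝ => t^n * Real.exp (-t^2/2)) atBot (nhds 0) := by
  have h1 : Tendsto (fun y : ℝ => y^n * Real.exp (-y)) atTop (nhds 0) :=
    Real.tendsto_pow_mul_exp_neg_atTop_nhds_zero n
  have h2 : Tendsto (fun t : ℝ => t^2/2) atBot atTop := by
    apply Filter.Tendsto.atTop_div_const (by norm_num : (0:ℝ) < 2)
    have h := (tendsto_pow_atTop (two_ne_zero)).comp (tendsto_neg_atBot_atTop (G := ℝ))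
    have he : ((fun x : ℝ => x ^ 2) ∘ (fun t : ℝ => -t)) = fun t : ℝ => t ^ 2 := by
      funext t; simp [Function.comp, neg_sq]
    rwa [he] at h
  have h3 := h1.comp h2
  apply squeeze_zero_norm' _ h3
  filter_upwards [eventually_le_atBot (-2:ℝ)] with t ht
  have habs : (2:ℝ) ≤ |t| := by
    rw [abs_of_nonpos (by linarith)]; linarith
  have h4 : |t| ≤ t^2/2 := by
    nlinarith [abs_nonneg t, sq_abs t]
  have hnorm : ‖t^n * Real.exp (-t^2/2)‖ = |t|^n * Real.exp (-t^2/2) := by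
    rw [Real.norm_eq_abs, abs_mul, abs_pow, abs_of_pos (Real.exp_pos _)]
  rw [hnorm]
  have harg : -t^2/2 = -(t^2/2) := by ring
  simp only [Function.comp, harg]
  exact mul_le_mul_of_nonneg_right (pow_le_pow_left₀ (abs_nonneg t) h4 n)
    (Real.exp_pos _).le

lemma tend_f :
    Tendsto (fun t : ℝ => Q t * Real.exp (-t^2/2)) atBot (nhds 0) := by
  have heq : (fun t : ℝ => Q t * Real.exp (-t^2/2))
      = fun t : ℝ => (406111/324000)*(t^0*Real.exp (-t^2/2)) + (62959/63000)*(t^1*Real.exp (-t^2/2)) + (313207/504000)*(t^2*Real.exp (-t^2/2)) + (8633/27000)*(t^3*Real.exp (-t^2/2)) + (39317/288000)*(t^4*Real.exp (-t^2/2)) + (3379/72000)*(t^5*Real.exp (-t^2/2)) + (21307/1728000)*(t^6*Real.exp (-t^2/2)) + (331/144000)*(t^7*Real.exp (-t^2/2)) + (8677/32256000)*(t^8*Real.exp (-t^2/2)) + (2159/145152000)*(t^9*Real.exp (-t^2/2)) := by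
    funext t; simp only [Q]; ring
  rw [heq]
  have h := (((((((((((tend_pow 0).const_mul ((406111/324000):ℝ)).add ((tend_pow 1).const_mul ((62959/63000):ℝ))).add ((tend_pow 2).const_mul ((313207/504000):ℝ))).add ((tend_pow 3).const_mul ((8633/27000):ℝ))).add ((tend_pow 4).const_mul ((39317/288000):ℝ))).add ((tend_pow 5).const_mul ((3379/72000):ℝ))).add ((tend_pow 6).const_mul ((21307/1728000):ℝ))).add ((tend_pow 7).const_mul ((331/144000):ℝ))).add ((tend_pow 8).const_mul ((8677/32256000):ℝ))).add ((tend_pow 9).const_mul ((2159/145152000):ℝ)))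
  convert h using 2
  norm_num

/-- Key tail bound: `∫_{-∞}^{-2} e^{-t²/2} dt ≥ (337/800) e^{-2}`. -/
lemma tail_bound :
    (337/800 : ℝ) * Real.exp (-2) ≤ ∫ t in Set.Iic (-2:ℝ), Real.exp (-t^2/2) := by
  have hFTC : (∫ t in Set.Iic (-2:ℝ), (Qd t - t * Q t) * Real.exp (-t^2/2))
      = Q (-2) * Real.exp (-(-2:ℝ)^2/2) - 0 :=
    MeasureTheory.integral_Iic_of_hasDerivAt_of_tendsto'
      (fun y _ => hasDerivAt_f y) int_A.integrableOn tend_f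
  have hval : Q (-2:ℝ) * Real.exp (-(-2:ℝ)^2/2) - 0 = (337/800 : ℝ) * Real.exp (-2) := by
    simp only [Q]
    norm_num
  rw [hval] at hFTC
  have hmono : (∫ t in Set.Iic (-2:ℝ), (Qd t - t * Q t) * Real.exp (-t^2/2))
      ≤ ∫ t in Set.Iic (-2:ℝ), Real.exp (-t^2/2) := by
    apply setIntegral_mono_on int_A.integrableOn int_gauss.integrableOn measurableSet_Iic
    intro t ht
    have ht' : t ≤ -2 := ht
    have hu : (0:ℝ) ≤ -2 - t := by linarith
    have hid : 1 - (Qd t - t * Q t)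
        = (1181/41472000)*(-2-t)^9 + (2159/145152000)*(-2-t)^10 := by
      simp only [Q, Qd]; ring
    have hkey : Qd t - t * Q t ≤ 1 := by
      nlinarith [pow_nonneg hu 9, pow_nonneg hu 10]
    calc (Qd t - t * Q t) * Real.exp (-t^2/2)
        ≤ 1 * Real.exp (-t^2/2) :=
          mul_le_mul_of_nonneg_right hkey (Real.exp_pos _).le
      _ = Real.exp (-t^2/2) := one_mul _
  linarith

/-- The reverse hazard rate of the standard normal distribution is bounded by `2.374` on
`[-2, 0)`. -/
theorem stmt_13 (x : ℝ) (hx : x ∈ Set.Ico (-2 : ℝ) 0) : phi x / Phi x ≤ 2.374 := by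
  obtain ⟨hx1, hx2⟩ := hx
  have hCpos : (0:ℝ) < (2 * Real.pi) ^ (-(1 / 2) : ℝ) :=
    Real.rpow_pos_of_pos (by positivity) _
  have hIntOn : ∀ y : ℝ, IntegrableOn (fun t : ℝ => Real.exp (-t^2/2)) (Set.Iic y) :=
    fun y => int_gauss.integrableOn
  have hsplit : (∫ t in Set.Iic x, Real.exp (-t^2/2))
      - ∫ t in Set.Iic (-2:ℝ), Real.exp (-t^2/2)
      = ∫ t in (-2:ℝ)..x, Real.exp (-t^2/2) :=
    intervalIntegral.integral_Iic_sub_Iic (hIntOn _) (hIntOn _)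
  have hint1 : IntervalIntegrable (fun t : ℝ => Real.exp (-t^2/2)) volume (-2) x :=
    int_gauss.intervalIntegrable
  have hintneg : Integrable (fun t : ℝ => -t * Real.exp (-t^2/2)) := by
    have h := (int_pow 1).neg
    apply h.congr
    filter_upwards with t
    simp only [Pi.neg_apply]
    ring
  have hFTC2 : (∫ t in (-2:ℝ)..x, -t * Real.exp (-t^2/2))
      = Real.exp (-x^2/2) - Real.exp (-2) := by
    have h := intervalIntegral.integral_eq_sub_of_hasDerivAt
      (a := (-2:ℝ)) (b := x) (f := fun t : ℝ => Real.exp (-t^2/2)) (f' := fun t : ℝ => -t * Real.exp (-t^2/2))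
      (fun y _ => hasDerivAt_gauss y) hintneg.intervalIntegrable
    rw [h]; norm_num
  have hnonneg : 0 ≤ ∫ t in (-2:ℝ)..x, ((2374/1000:ℝ) + t) * Real.exp (-t^2/2) := by
    apply intervalIntegral.integral_nonneg hx1
    intro t ht
    have h1 : (-2:ℝ) ≤ t := ht.1
    have h2 : (0:ℝ) ≤ (2374/1000:ℝ) + t := by linarith
    exact mul_nonneg h2 (Real.exp_pos _).le
  have hlin : (∫ t in (-2:ℝ)..x, ((2374/1000:ℝ) + t) * Real.exp (-t^2/2))
      = (2374/1000:ℝ) * (∫ t in (-2:ℝ)..x, Real.exp (-t^2/2))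
        - ∫ t in (-2:ℝ)..x, -t * Real.exp (-t^2/2) := by
    rw [show (fun t : ℝ => ((2374/1000:ℝ) + t) * Real.exp (-t^2/2))
        = fun t : ℝ => (2374/1000:ℝ) * Real.exp (-t^2/2) - (-t) * Real.exp (-t^2/2)
      from funext fun t => by ring]
    rw [intervalIntegral.integral_sub (hint1.const_mul _) hintneg.intervalIntegrable,
      intervalIntegral.integral_const_mul]
  have hJnonneg : 0 ≤ ∫ t in (-2:ℝ)..x, Real.exp (-t^2/2) := by
    apply intervalIntegral.integral_nonneg hx1
    intro t _
    positivity
  have htail := tail_bound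
  have hexp2 : (0:ℝ) < Real.exp (-2) := Real.exp_pos _
  have hKey : Real.exp (-x^2/2) ≤ (2374/1000:ℝ) * ∫ t in Set.Iic x, Real.exp (-t^2/2) := by
    linarith
  have hIpos : 0 < ∫ t in Set.Iic x, Real.exp (-t^2/2) := by linarith
  have hPhiPos : 0 < Phi x := by
    unfold Phi
    have : (∫ t in Set.Iic x, Real.exp (-t ^ 2 / 2)) = ∫ t in Set.Iic x, Real.exp (-t^2/2) := rfl
    rw [this]
    exact mul_pos hCpos hIpos
  rw [div_le_iff₀ hPhiPos]
  unfold phi Phi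
  have h2374 : (2.374 : ℝ) = 2374/1000 := by norm_num
  rw [h2374]
  calc (2 * Real.pi) ^ (-(1 / 2) : ℝ) * Real.exp (-x ^ 2 / 2)
      ≤ (2 * Real.pi) ^ (-(1 / 2) : ℝ)
        * ((2374/1000:ℝ) * ∫ t in Set.Iic x, Real.exp (-t^2/2)) :=
        mul_le_mul_of_nonneg_left hKey hCpos.le
    _ = (2374/1000:ℝ) * ((2 * Real.pi) ^ (-(1 / 2) : ℝ)
        * ∫ t in Set.Iic x, Real.exp (-t ^ 2 / 2)) := by ring
end Stmt13
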